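/- Let G = (V, E_1, …, E_k) be a multilayer graph and W its combined weighted wedge graph. Then the optimum of MinMultiLayerSTC on G, i.e., the minimum of Σ_{i∈[k]} |E_i∖S_i| + d_k(S_1,…,S_k) over all families of labelings S_i ⊆ E_i each fulfilling the STC for E_i, equals the minimum weight of a vertex cover of W. -/

import Mathlib

open Finset

/-- A wedge `(v, {u, w})` of an edge set `E`. -/
def IsWedge {V : Type*} (E : Finset (Sym2 V)) (v u w : V) : Prop :=
  u ≠ v ∧ v ≠ w ∧ u ≠ w ∧ s(u, v) ∈ E ∧ s(v, w) ∈ E ∧ s(u, w) ∉ E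

/-- A labeling `S ⊆ E` fulfills the strong triadic closure for `E`. -/
def FulfillsSTC {V : Type*} (E S : Finset (Sym2 V)) : Prop :=
  ∀ u v w : V, u ≠ v → v ≠ w → u ≠ w → s(u, v) ∈ S → s(v, w) ∈ S → s(u, w) ∈ E

/-- `s(e)`: the number of layers in which `e` is labeled strong. -/
def sCount {V : Type*} [DecidableEq V] {k : ℕ} (Ss : Fin k → Finset (Sym2 V))
    (e : Sym2 V) : ℕ :=
  (Finset.univ.filter fun i => e ∈ Ss i).card

/-- `w(e)`: the number of layers in which `e` is labeled weak. -/
def wCount {V : Type*} [DecidableEq V] {k : ℕ} (Es Ss : Fin k → Finset (Sym2 V))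
    (e : Sym2 V) : ℕ :=
  (Finset.univ.filter fun i => e ∈ Es i ∧ e ∉ Ss i).card

/-- `d_k(S_1, …, S_k) = ∑_{e ∈ E, w(e) > 0} s(e)`: the number of disagreements. -/
def disagree {V : Type*} [DecidableEq V] {k : ℕ} (Es Ss : Fin k → Finset (Sym2 V)) : ℕ :=
  ∑ e ∈ (Finset.univ.biUnion Es).filter (fun e => 0 < wCount Es Ss e), sCount Ss e

/-- `C` (a set of vertices `n_e`, identified with the corresponding edges `e`) is a
vertex cover of the combined wedge graph `W` of the multilayer graph: in `W`,
`n_{uv}` and `n_{vw}` are adjacent iff `(v,{u,w})` is a wedge of some layer `E_i`,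
and a vertex cover contains at least one endpoint of every edge. -/
def IsCombinedWedgeGraphVC {V : Type*} {k : ℕ} (Es : Fin k → Finset (Sym2 V))
    (C : Finset (Sym2 V)) : Prop :=
  ∀ i : Fin k, ∀ v u w : V, IsWedge (Es i) v u w → s(u, v) ∈ C ∨ s(v, w) ∈ C

/-- The weight `w(n_e) = |{i ∈ [k] : e ∈ E_i}|` of the vertex `n_e` of the combined
weighted wedge graph. -/
def wedgeWeight {V : Type*} [DecidableEq V] {k : ℕ} (Es : Fin k → Finset (Sym2 V))
    (e : Sym2 V) : ℕ :=
  (Finset.univ.filter fun i => e ∈ Es i).card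

lemma wCount_add_sCount {V : Type*} [DecidableEq V] {k : ℕ}
    {Es Ss : Fin k → Finset (Sym2 V)} (hS : ∀ i, Ss i ⊆ Es i) (e : Sym2 V) :
    wCount Es Ss e + sCount Ss e = wedgeWeight Es e := by
  classical
  unfold wCount sCount wedgeWeight
  have h := Finset.card_filter_add_card_filter_not
    (s := Finset.univ.filter fun i : Fin k => e ∈ Es i) (p := fun i => e ∈ Ss i)
  rw [Finset.filter_filter, Finset.filter_filter] at h
  rw [← h, Nat.add_comm]
  congr 2
  ext i
  simp only [Finset.mem_filter, Finset.mem_univ, true_and]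
  exact ⟨fun h2 => ⟨hS i h2, h2⟩, fun h2 => h2.2⟩

lemma cost_eq {V : Type*} [DecidableEq V] {k : ℕ} (Es Ss : Fin k → Finset (Sym2 V))
    (hS : ∀ i, Ss i ⊆ Es i) :
    (∑ i : Fin k, (Es i \ Ss i).card) + disagree Es Ss
      = ∑ e ∈ (Finset.univ.biUnion Es).filter (fun e => 0 < wCount Es Ss e),
          wedgeWeight Es e := by
  classical
  have h1 : (∑ i : Fin k, (Es i \ Ss i).card)
      = ∑ e ∈ (Finset.univ.biUnion Es), wCount Es Ss e := by
    have heq : ∀ i : Fin k, (Es i \ Ss i)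
        = (Finset.univ.biUnion Es).filter (fun e => e ∈ Es i ∧ e ∉ Ss i) := by
      intro i; ext e
      simp only [Finset.mem_sdiff, Finset.mem_filter, Finset.mem_biUnion, Finset.mem_univ,
        true_and]
      constructor
      · rintro ⟨h1, h2⟩; exact ⟨⟨i, h1⟩, h1, h2⟩
      · rintro ⟨_, h1, h2⟩; exact ⟨h1, h2⟩
    simp_rw [heq, Finset.card_filter, wCount, Finset.card_filter]
    rw [Finset.sum_comm]
  have h2 : ∑ e ∈ (Finset.univ.biUnion Es), wCount Es Ss e
      = ∑ e ∈ (Finset.univ.biUnion Es).filter (fun e => 0 < wCount Es Ss e),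
          wCount Es Ss e := by
    exact (Finset.sum_filter_of_ne fun e _ hne => Nat.pos_of_ne_zero hne).symm
  rw [h1, h2, disagree, ← Finset.sum_add_distrib]
  exact Finset.sum_congr rfl fun e _ => wCount_add_sCount hS e

/-- The optimum of MinMultiLayerSTC equals the minimum weight of a vertex cover of
the combined weighted wedge graph. -/
theorem min_multilayer_stc_eq_min_weight_vc {V : Type*} [DecidableEq V] {k : ℕ}
    (Es : Fin k → Finset (Sym2 V)) :
    sInf {n : ℕ | ∃ Ss : Fin k → Finset (Sym2 V),
        (∀ i, Ss i ⊆ Es i) ∧ (∀ i, FulfillsSTC (Es i) (Ss i)) ∧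
        n = (∑ i : Fin k, (Es i \ Ss i).card) + disagree Es Ss}
      = sInf {n : ℕ | ∃ C : Finset (Sym2 V),
        C ⊆ Finset.univ.biUnion Es ∧ IsCombinedWedgeGraphVC Es C ∧
        n = ∑ e ∈ C, wedgeWeight Es e} := by
  classical
  congr 1
  ext n
  simp only [Set.mem_setOf_eq]
  constructor
  · rintro ⟨Ss, hS, hSTC, rfl⟩
    refine ⟨(Finset.univ.biUnion Es).filter (fun e => 0 < wCount Es Ss e),
      Finset.filter_subset _ _, ?_, cost_eq Es Ss hS⟩
    rintro i v u w ⟨huv, hvw, huw, h1, h2, h3⟩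
    by_cases hs1 : s(u, v) ∈ Ss i
    · by_cases hs2 : s(v, w) ∈ Ss i
      · exact absurd (hSTC i u v w huv hvw huw hs1 hs2) h3
      · right
        refine Finset.mem_filter.mpr ⟨Finset.mem_biUnion.mpr ⟨i, Finset.mem_univ i, h2⟩, ?_⟩
        exact Finset.card_pos.mpr ⟨i, Finset.mem_filter.mpr ⟨Finset.mem_univ i, h2, hs2⟩⟩
    · left
      refine Finset.mem_filter.mpr ⟨Finset.mem_biUnion.mpr ⟨i, Finset.mem_univ i, h1⟩, ?_⟩
      exact Finset.card_pos.mpr ⟨i, Finset.mem_filter.mpr ⟨Finset.mem_univ i, h1, hs1⟩⟩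
  · rintro ⟨C, hC, hVC, rfl⟩
    refine ⟨fun i => Es i \ C, fun i => Finset.sdiff_subset, ?_, ?_⟩
    · intro i u v w huv hvw huw hs1 hs2
      by_contra h4
      obtain h1 := Finset.mem_sdiff.mp hs1
      obtain h2 := Finset.mem_sdiff.mp hs2
      rcases hVC i v u w ⟨huv, hvw, huw, h1.1, h2.1, h4⟩ with h | h
      · exact h1.2 h
      · exact h2.2 h
    · rw [cost_eq Es _ (fun i => Finset.sdiff_subset)]
      congr 1
      ext e
      simp only [Finset.mem_filter, Finset.mem_biUnion, Finset.mem_univ, true_and]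
      constructor
      · intro hCe
        obtain ⟨i, _, hi⟩ := Finset.mem_biUnion.mp (hC hCe)
        refine ⟨⟨i, hi⟩, Finset.card_pos.mpr ⟨i, Finset.mem_filter.mpr
          ⟨Finset.mem_univ i, hi, fun hsd => (Finset.mem_sdiff.mp hsd).2 hCe⟩⟩⟩
      · rintro ⟨hE, hpos⟩
        obtain ⟨i, hi⟩ := Finset.card_pos.mp hpos
        simp only [Finset.mem_filter, Finset.mem_univ, true_and, Finset.mem_sdiff,
          not_and, not_not] at hi
        exact hi.2 hi.1
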